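/- Let G be a countably infinite group and F₂ the free group on two generators, both acting in a Borel way on a standard Borel space Z, with a Borel cocycle α : F₂ × Z → G satisfying α(f, z)·z = f·z for all f ∈ F₂, z ∈ Z, and such that f ↦ α(f, z) is injective for each z ∈ Z. Fix an injective group homomorphism ι : F₂ → F₂ whose image has infinite index in F₂. Then the formula f·(g, z) = (g · α(ι(f), g⁻¹·z)⁻¹, z) defines a free Borel action of F₂ on G × Z which commutes with the diagonal G-action g'·(g, z) = (g'g, g'·z). Furthermore, there is a Borel injection c : ℕ × Z → G × Z whose image meets every F₂-orbit of this action exactly once, and which satisfies c(n, z) ∈ G × {z} for all n ∈ ℕ and c(0, z) = (1_G, z) for all z ∈ Z. -/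

import Mathlib

/-- The free group on two generators. -/
abbrev F2 := FreeGroup (Fin 2)

theorem stmt11 (G : Type*) [Group G] [Countable G] [Infinite G]
    [MeasurableSpace G] [DiscreteMeasurableSpace G]
    (Z : Type) [MeasurableSpace Z] [StandardBorelSpace Z]
    -- a Borel action of G on Z
    (a : G → Z → Z) (ha1 : a 1 = id) (hamul : ∀ g g' : G, a (g * g') = a g ∘ a g')
    (hameas : ∀ g : G, Measurable (a g))
    -- a Borel action of F₂ on Z
    (b : F2 → Z → Z) (hb1 : b 1 = id) (hbmul : ∀ f f' : F2, b (f * f') = b f ∘ b f')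
    (hbmeas : ∀ f : F2, Measurable (b f))
    -- a Borel cocycle α : F₂ × Z → G relating the actions
    (α : F2 → Z → G) (hαmeas : ∀ f : F2, Measurable (α f))
    (hαcoc : ∀ (f₁ f₂ : F2) (z : Z), α (f₂ * f₁) z = α f₂ (b f₁ z) * α f₁ z)
    (hα : ∀ (f : F2) (z : Z), a (α f z) z = b f z)
    (hαinj : ∀ z : Z, Function.Injective fun f : F2 => α f z)
    -- an injective endomorphism of F₂ whose image has infinite index
    (ι : F2 →* F2) (hι : Function.Injective ι) (hιidx : Infinite (F2 ⧸ ι.range))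
    -- the operation f · (g, z) = (g · α(ι(f), g⁻¹ · z)⁻¹, z)
    (d : F2 → G × Z → G × Z)
    (hd : ∀ (f : F2) (p : G × Z), d f p = (p.1 * (α (ι f) (a p.1⁻¹ p.2))⁻¹, p.2)) :
    -- d is a free Borel action of F₂ on G × Z
    (∀ p : G × Z, d 1 p = p) ∧
    (∀ (f f' : F2) (p : G × Z), d (f * f') p = d f (d f' p)) ∧
    (∀ f : F2, Measurable (d f)) ∧
    (∀ f : F2, f ≠ 1 → ∀ p : G × Z, d f p ≠ p) ∧
    -- it commutes with the diagonal G-action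
    (∀ (g' : G) (f : F2) (p : G × Z),
      d f (g' * p.1, a g' p.2) = (g' * (d f p).1, a g' (d f p).2)) ∧
    -- a Borel injection whose image is a transversal of the F₂-orbits
    (∃ c : ℕ × Z → G × Z,
      Measurable c ∧ Function.Injective c ∧
      (∀ p : G × Z, ∃! q : G × Z, q ∈ Set.range c ∧ ∃ f : F2, d f q = p) ∧
      (∀ (n : ℕ) (z : Z), (c (n, z)).2 = z) ∧
      (∀ z : Z, c (0, z) = (1, z))) := by
  classical
  have : Countable F2 := FreeGroup.toWord_injective.countable
  have ha_comp : ∀ (g g' : G) (z : Z), a (g * g') z = a g (a g' z) :=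
    fun g g' z => congrFun (hamul g g') z
  have hα1 : ∀ z : Z, α 1 z = 1 := by
    intro z
    have h : α 1 z = α 1 z * α 1 z := by
      have := hαcoc 1 1 z
      rwa [one_mul, hb1, id] at this
    exact (left_eq_mul.mp h)
  -- Part 1
  have h1 : ∀ p : G × Z, d 1 p = p := by
    intro p
    rw [hd]; simp [hα1]
  -- Part 2
  have h2 : ∀ (f f' : F2) (p : G × Z), d (f * f') p = d f (d f' p) := by
    intro f f' ⟨g, z⟩
    rw [hd, hd, hd]
    refine Prod.ext ?_ rfl
    simp only
    have key : a (g * (α (ι f') (a g⁻¹ z))⁻¹)⁻¹ z = b (ι f') (a g⁻¹ z) := by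
      rw [mul_inv_rev, inv_inv, ha_comp, hα]
    rw [key, map_mul, hαcoc (ι f') (ι f) (a g⁻¹ z)]
    group
  -- Part 3
  have h3 : ∀ f : F2, Measurable (d f) := by
    intro f
    have hs : Measurable fun q : Z × G => d f (q.2, q.1) := by
      apply measurable_from_prod_countable_left
      intro g
      have : (fun z : Z => d f (g, z)) = fun z => (g * (α (ι f) (a g⁻¹ z))⁻¹, z) :=
        funext fun z => hd f (g, z)
      rw [this]
      exact ((Measurable.of_discrete (f := fun h : G => g * h⁻¹)).comp
        ((hαmeas (ι f)).comp (hameas g⁻¹))).prodMk measurable_id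
    exact hs.comp measurable_swap
  -- Part 4
  have h4 : ∀ f : F2, f ≠ 1 → ∀ p : G × Z, d f p ≠ p := by
    intro f hf p hcon
    rw [hd] at hcon
    have h5 : p.1 * (α (ι f) (a p.1⁻¹ p.2))⁻¹ = p.1 := congrArg Prod.fst hcon
    have h6 : α (ι f) (a p.1⁻¹ p.2) = 1 := by
      have := mul_eq_left.mp h5
      rwa [inv_eq_one] at this
    have h7 : ι f = 1 := hαinj (a p.1⁻¹ p.2) (by simpa [hα1] using h6)
    exact hf (hι (by rw [h7, map_one]))
  -- Part 5
  have h5 : ∀ (g' : G) (f : F2) (p : G × Z),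
      d f (g' * p.1, a g' p.2) = (g' * (d f p).1, a g' (d f p).2) := by
    intro g' f ⟨g, z⟩
    rw [hd, hd]
    simp only
    have key : a (g' * g)⁻¹ (a g' z) = a g⁻¹ z := by
      rw [mul_inv_rev, ha_comp, ← ha_comp g'⁻¹ g' z, inv_mul_cancel, ha1, id]
    rw [key, mul_assoc]
  refine ⟨h1, h2, h3, h4, h5, ?_⟩
  -- characterization of the orbit relation
  have hchar : ∀ (z : Z) (g h : G),
      (∃ f : F2, d f (g, z) = (h, z)) ↔ ∃ f : F2, α (ι f) (a g⁻¹ z) = h⁻¹ * g := by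
    intro z g h
    refine exists_congr fun f => ?_
    rw [hd]
    simp only [Prod.mk.injEq, and_true]
    constructor
    · rintro rfl; group
    · intro hh
      rw [hh]; group
  -- orbit relation is an equivalence relation
  have hRsymm : ∀ (z : Z) (g h : G),
      (∃ f : F2, d f (g, z) = (h, z)) → ∃ f : F2, d f (h, z) = (g, z) := by
    rintro z g h ⟨f, hf⟩
    exact ⟨f⁻¹, by rw [← hf, ← h2, inv_mul_cancel, h1]⟩
  have hRtrans : ∀ (z : Z) (g h k : G),
      (∃ f : F2, d f (g, z) = (h, z)) → (∃ f : F2, d f (h, z) = (k, z)) →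
      ∃ f : F2, d f (g, z) = (k, z) := by
    rintro z g h k ⟨f, hf⟩ ⟨f', hf'⟩
    exact ⟨f' * f, by rw [h2, hf, hf']⟩
  have hRmeas : ∀ g h : G, MeasurableSet {z | ∃ f : F2, d f (g, z) = (h, z)} := by
    intro g h
    have hset : {z | ∃ f : F2, d f (g, z) = (h, z)}
        = ⋃ f : F2, (fun z => α (ι f) (a g⁻¹ z)) ⁻¹' {h⁻¹ * g} := by
      ext z
      simp only [Set.mem_setOf_eq, Set.mem_iUnion, Set.mem_preimage, Set.mem_singleton_iff]
      exact hchar z g h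
    rw [hset]
    exact MeasurableSet.iUnion fun f =>
      ((hαmeas (ι f)).comp (hameas g⁻¹)) (measurableSet_singleton _)
  -- an enumeration of G with e 0 = 1
  obtain ⟨eD⟩ := nonempty_denumerable G
  let e0 : ℕ ≃ G := (Denumerable.eqv G).symm
  let e : ℕ ≃ G := (Equiv.swap 0 (e0.symm 1)).trans e0
  have he0 : e 0 = 1 := by simp [e, Equiv.swap_apply_left]
  -- the minimum index of the orbit of g
  have hex : ∀ (z : Z) (g : G), ∃ n : ℕ, ∃ f : F2, d f (e n, z) = (g, z) :=
    fun z g => ⟨e.symm g, 1, by rw [h1, e.apply_symm_apply]⟩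
  let m : Z → G → ℕ := fun z g => Nat.find (hex z g)
  have hmmeas : ∀ g : G, Measurable fun z => m z g :=
    fun g => measurable_find (fun z => hex z g) (fun k => hRmeas (e k) g)
  have hmR : ∀ (z : Z) (g : G), ∃ f : F2, d f (e (m z g), z) = (g, z) :=
    fun z g => Nat.find_spec (hex z g)
  have hm_congr : ∀ (z : Z) (g h : G), (∃ f : F2, d f (g, z) = (h, z)) → m z g = m z h := by
    intro z g h hr
    refine le_antisymm ?_ ?_
    · exact Nat.find_le (hRtrans z (e (m z h)) h g (hmR z h) (hRsymm z g h hr))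
    · exact Nat.find_le (hRtrans z (e (m z g)) g h (hmR z g) hr)
  have hm_eq : ∀ (z : Z) (g h : G), m z g = m z h → ∃ f : F2, d f (g, z) = (h, z) := by
    intro z g h hmzgh
    refine hRtrans z g (e (m z g)) h (hRsymm z (e (m z g)) g (hmR z g)) ?_
    rw [hmzgh]; exact hmR z h
  have hmem : ∀ (z : Z) (g : G), m z (e (m z g)) = m z g :=
    fun z g => hm_congr z (e (m z g)) g (hmR z g)
  have hmem0 : ∀ z : Z, m z (e 0) = 0 :=
    fun z => Nat.le_zero.mp (Nat.find_le ⟨1, h1 _⟩)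
  -- each z has infinitely many orbits
  have hTinf : ∀ z : Z, {n : ℕ | m z (e n) = n}.Infinite := by
    intro z
    have hRα : ∀ w w' : F2,
        (∃ f : F2, d f ((α w z)⁻¹, z) = ((α w' z)⁻¹, z)) ↔ ∃ f : F2, ι f * w = w' := by
      intro w w'
      rw [hchar]
      refine exists_congr fun f => ?_
      rw [inv_inv, inv_inv, hα]
      constructor
      · intro hh
        apply hαinj z
        simp only
        rw [hαcoc w (ι f) z, hh]
        group
      · rintro rfl
        rw [hαcoc w (ι f) z]
        group
    let χ : F2 ⧸ ι.range → ℕ := Quotient.lift (fun w : F2 => m z (α w⁻¹ z)⁻¹) (by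
      intro w w' hww'
      have hmem' : w⁻¹ * w' ∈ ι.range := (QuotientGroup.leftRel_apply).mp hww'
      obtain ⟨f, hf⟩ := hmem'
      refine hm_congr z _ _ ((hRα w⁻¹ w'⁻¹).mpr ⟨f⁻¹, ?_⟩)
      rw [map_inv, hf]
      group)
    have hχinj : Function.Injective χ := by
      intro q q'
      induction q using Quotient.inductionOn with
      | h w =>
      induction q' using Quotient.inductionOn with
      | h w' =>
      intro hq
      have : ∃ f : F2, d f ((α w⁻¹ z)⁻¹, z) = ((α w'⁻¹ z)⁻¹, z) := hm_eq z _ _ hq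
      obtain ⟨f, hf⟩ := (hRα w⁻¹ w'⁻¹).mp this
      refine Quotient.sound ((QuotientGroup.leftRel_apply).mpr ⟨f⁻¹, ?_⟩)
      have hw' : w' = w * (ι f)⁻¹ := by rw [← inv_inv w', ← hf]; group
      rw [map_inv, hw']
      group
    have hχmem : ∀ q : F2 ⧸ ι.range, χ q ∈ {n : ℕ | m z (e n) = n} := by
      intro q
      induction q using Quotient.inductionOn with
      | h w => exact hmem z (α w⁻¹ z)⁻¹
    exact Set.infinite_of_injective_forall_mem hχinj hχmem
  have hTex : ∀ (z : Z) (j : ℕ), ∃ k : ℕ, j < k ∧ m z (e k) = k := by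
    intro z j
    obtain ⟨k, hk1, hk2⟩ := (hTinf z).exists_gt j
    exact ⟨k, hk2, hk1⟩
  -- the increasing enumeration of orbit-minimal indices
  let N : ℕ → Z → ℕ := fun n =>
    Nat.rec (motive := fun _ => Z → ℕ) (fun _ => 0)
      (fun _ Nn z => Nat.find (hTex z (Nn z))) n
  have hN0 : ∀ z : Z, N 0 z = 0 := fun _ => rfl
  have hNsucc : ∀ (n : ℕ) (z : Z), N (n + 1) z = Nat.find (hTex z (N n z)) := fun _ _ => rfl
  have hNspec : ∀ (n : ℕ) (z : Z), N n z < N (n + 1) z ∧ m z (e (N (n + 1) z)) = N (n + 1) z :=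
    fun n z => Nat.find_spec (hTex z (N n z))
  have hNmem : ∀ (n : ℕ) (z : Z), m z (e (N n z)) = N n z := by
    intro n z
    cases n with
    | zero => rw [hN0]; exact hmem0 z
    | succ k => exact (hNspec k z).2
  have hNmono : ∀ z : Z, StrictMono fun n => N n z :=
    fun z => strictMono_nat_of_lt_succ fun n => (hNspec n z).1
  have hNmeas : ∀ n : ℕ, Measurable fun z => N n z := by
    intro n
    induction n with
    | zero => exact measurable_const
    | succ k ih =>
      have : (fun z => N (k + 1) z) = fun z => Nat.find (hTex z (N k z)) := rfl
      rw [this]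
      apply measurable_find
      intro j
      have hseteq : {z | N k z < j ∧ m z (e j) = j}
          = ((fun z => N k z) ⁻¹' (Set.Iio j))ᶜᶜ ∩ ((fun z => m z (e j)) ⁻¹' {j}) := by
        ext z
        simp [Set.mem_preimage]
      rw [hseteq]
      exact (((ih .of_discrete).compl).compl).inter ((hmmeas (e j)) (measurableSet_singleton _))
  -- N enumerates all orbit-minimal indices
  have hNsurj : ∀ (z : Z) (k : ℕ), m z (e k) = k → ∃ n : ℕ, N n z = k := by
    intro z k hk
    have hub : ∃ n : ℕ, k < N n z :=
      ⟨k + 1, lt_of_lt_of_le (Nat.lt_succ_self k) ((hNmono z).le_apply)⟩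
    have hfind0 : Nat.find hub ≠ 0 := by
      intro h0
      have := Nat.find_spec hub
      rw [h0, hN0] at this
      exact Nat.not_lt_zero k this
    obtain ⟨n', hn'⟩ := Nat.exists_eq_succ_of_ne_zero hfind0
    have hle : N n' z ≤ k := by
      by_contra hcon
      exact (Nat.find_min hub (by omega : n' < Nat.find hub)) (lt_of_not_ge hcon)
    have hlt : k < N (n' + 1) z := by
      have h := Nat.find_spec hub
      rw [hn'] at h
      exact h
    refine ⟨n', ?_⟩
    rcases lt_or_eq_of_le hle with hlt' | heq
    · exfalso
      have : N (n' + 1) z ≤ k := Nat.find_le ⟨hlt', hk⟩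
      omega
    · exact heq
  -- the transversal map
  refine ⟨fun q => (e (N q.1 q.2), q.2), ?_, ?_, ?_, fun n z => rfl, ?_⟩
  · -- measurable
    have hs : Measurable fun q : Z × ℕ => ((e (N q.2 q.1), q.1) : G × Z) := by
      apply measurable_from_prod_countable_left
      intro n
      exact (Measurable.of_discrete.comp (hNmeas n)).prodMk measurable_id
    exact hs.comp measurable_swap
  · -- injective
    rintro ⟨n, z⟩ ⟨n', z'⟩ hq
    simp only [Prod.mk.injEq] at hq
    obtain ⟨hq1, rfl⟩ := hq
    have := (hNmono z).injective (e.injective hq1)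
    simp [this]
  · -- transversal
    rintro ⟨g, z⟩
    obtain ⟨n0, hn0⟩ := hNsurj z (m z g) (hmem z g)
    refine ⟨(e (m z g), z), ⟨⟨(n0, z), by show (e (N n0 z), z) = _; rw [hn0]⟩, hmR z g⟩, ?_⟩
    rintro q' ⟨⟨⟨n', z'⟩, rfl⟩, ⟨f', hf'⟩⟩
    have hz' : z' = z := by
      have h := congrArg Prod.snd hf'
      rw [hd] at h
      exact h
    rw [hz'] at hf' ⊢
    have hNn' : m z (e (N n' z)) = m z g := hm_congr z _ _ ⟨f', hf'⟩
    rw [hNmem n' z] at hNn'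
    show (e (N n' z), z) = _
    rw [hNn']
  · -- c (0, z) = (1, z)
    intro z
    show (e (N 0 z), z) = (1, z)
    rw [hN0, he0]
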